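/- Let ω = Ω₁ ∪ Ω₂ be a partition of ω into two infinite sets, and let H = {g ∈ Sym(ω) : |g[Ω₁] △ Ω_i| < ℵ₀ for some i ∈ {1,2}}. Then H is a meagre subset of Sym(ω) with the Polish topology of pointwise convergence. -/
import Mathlib


/-- The Polish topology of pointwise convergence on `Sym(ω)`, inherited from
the Baire space `ω^ω`. -/
noncomputable instance permTop : TopologicalSpace (Equiv.Perm ℕ) :=
  TopologicalSpace.induced (fun g : Equiv.Perm ℕ => (g : ℕ → ℕ)) inferInstance

open Set

private lemma continuous_coe_perm : Continuous (fun g : Equiv.Perm ℕ => (g : ℕ → ℕ)) :=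
  continuous_induced_dom

/-- The set of permutations sending `y` to `x` is open. -/
private lemma isOpen_eval (y x : ℕ) : IsOpen {g : Equiv.Perm ℕ | g y = x} := by
  have : {g : Equiv.Perm ℕ | g y = x}
      = (fun g : Equiv.Perm ℕ => (g : ℕ → ℕ)) ⁻¹' ((fun f : ℕ → ℕ => f y) ⁻¹' {x}) := rfl
  rw [this]
  exact (continuous_apply y |>.comp continuous_coe_perm).isOpen_preimage _ (isOpen_discrete _)

private lemma isClosed_S (Ω₁ Ω : Set ℕ) (n : ℕ) :
    IsClosed {g : Equiv.Perm ℕ | symmDiff (⇑g '' Ω₁) Ω ⊆ Set.range (fun k : Fin n => (k : ℕ))} := by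
  have key : {g : Equiv.Perm ℕ | symmDiff (⇑g '' Ω₁) Ω ⊆ Set.range (fun k : Fin n => (k : ℕ))}
      = ⋂ x ∈ {x : ℕ | x ∉ Set.range (fun k : Fin n => (k : ℕ))},
          {g : Equiv.Perm ℕ | x ∈ ⇑g '' Ω₁ ↔ x ∈ Ω} := by
    ext g
    simp only [Set.mem_setOf_eq, Set.mem_iInter]
    constructor
    · intro h x hx
      constructor
      · intro hg
        by_contra hΩ
        exact hx (h (Or.inl ⟨hg, hΩ⟩))
      · intro hΩ
        by_contra hg
        exact hx (h (Or.inr ⟨hΩ, hg⟩))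
    · intro h x hx
      by_contra hxr
      rcases hx with ⟨hg, hΩ⟩ | ⟨hΩ, hg⟩
      · exact hΩ ((h x hxr).1 hg)
      · exact hg ((h x hxr).2 hΩ)
  rw [key]
  refine isClosed_biInter fun x _ => ?_
  have he : ∀ (P : Prop) [Decidable P], IsClosed {g : Equiv.Perm ℕ | x ∈ ⇑g '' Ω₁ ↔ P} := by
    intro P _
    have h1 : {g : Equiv.Perm ℕ | x ∈ ⇑g '' Ω₁} = ⋃ y ∈ Ω₁, {g : Equiv.Perm ℕ | g y = x} := by
      ext g
      simp only [Set.mem_setOf_eq, Set.mem_iUnion]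
      constructor
      · rintro ⟨y, hy, rfl⟩; exact ⟨y, hy, rfl⟩
      · rintro ⟨y, hy, rfl⟩; exact ⟨y, hy, rfl⟩
    have h2 : {g : Equiv.Perm ℕ | x ∉ ⇑g '' Ω₁} = ⋃ y ∈ Ω₁ᶜ, {g : Equiv.Perm ℕ | g y = x} := by
      ext g
      simp only [Set.mem_setOf_eq, Set.mem_iUnion, Set.mem_compl_iff]
      constructor
      · intro h
        exact ⟨g.symm x, fun hy => h ⟨g.symm x, hy, g.apply_symm_apply x⟩, g.apply_symm_apply x⟩
      · rintro ⟨y, hy, rfl⟩ ⟨z, hz, hgz⟩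
        exact hy (g.injective hgz ▸ hz)
    by_cases hP : P
    · have : {g : Equiv.Perm ℕ | x ∈ ⇑g '' Ω₁ ↔ P} = {g : Equiv.Perm ℕ | x ∉ ⇑g '' Ω₁}ᶜ := by
        ext g; simp [hP]
      rw [this, h2]
      exact (isOpen_biUnion fun y _ => isOpen_eval y x).isClosed_compl
    · have : {g : Equiv.Perm ℕ | x ∈ ⇑g '' Ω₁ ↔ P} = {g : Equiv.Perm ℕ | x ∈ ⇑g '' Ω₁}ᶜ := by
        ext g; simp [hP]
      rw [this, h1]
      exact (isOpen_biUnion fun y _ => isOpen_eval y x).isClosed_compl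
  classical
  exact he (x ∈ Ω)

private lemma interior_S_empty (Ω₁ Ω₂ Ω : Set ℕ) (h1 : Ω₁.Infinite) (h2 : Ω₂.Infinite)
    (hd : Disjoint Ω₁ Ω₂) (n : ℕ) :
    interior {g : Equiv.Perm ℕ |
      symmDiff (⇑g '' Ω₁) Ω ⊆ Set.range (fun k : Fin n => (k : ℕ))} = ∅ := by
  classical
  by_contra hne
  rw [← Set.not_nonempty_iff_eq_empty, not_not] at hne
  obtain ⟨g, hg⟩ := hne
  have hgS : symmDiff (⇑g '' Ω₁) Ω ⊆ Set.range (fun k : Fin n => (k : ℕ)) :=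
    interior_subset
      (s := {g : Equiv.Perm ℕ | symmDiff (⇑g '' Ω₁) Ω ⊆ Set.range (fun k : Fin n => (k : ℕ))}) hg
  -- the interior is open in the induced topology
  obtain ⟨U, hUopen, hUeq⟩ := (isOpen_induced_iff (f := fun g : Equiv.Perm ℕ => (g : ℕ → ℕ))).mp isOpen_interior
  have hgU : (g : ℕ → ℕ) ∈ U := by
    have := hg; rw [← hUeq] at this; exact this
  obtain ⟨I, u, hIu, hpi⟩ := isOpen_pi_iff.mp hUopen _ hgU
  -- choose a ∈ Ω₁ avoiding I and the preimage of range n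
  have hfin : (↑I ∪ (⇑g) ⁻¹' (Set.range (fun k : Fin n => (k : ℕ))) : Set ℕ).Finite :=
    (I.finite_toSet).union ((Set.finite_range _).preimage (g.injective.injOn))
  obtain ⟨a, haΩ, ha⟩ := (h1.diff hfin).nonempty
  obtain ⟨b, hbΩ, hb⟩ := (h2.diff I.finite_toSet).nonempty
  have hab : a ≠ b := fun h => (hd.ne_of_mem haΩ hbΩ) h
  have hbΩ₁ : b ∉ Ω₁ := fun h => hd.ne_of_mem h hbΩ rfl
  -- the perturbed permutation
  set h : Equiv.Perm ℕ := g.trans (Equiv.refl ℕ) |>.symm.symm |>.trans (Equiv.refl ℕ) with hh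
  set p : Equiv.Perm ℕ := (Equiv.swap a b).trans g with hp
  -- p agrees with g on I
  have hpI : (p : ℕ → ℕ) ∈ (↑I : Set ℕ).pi u := by
    intro i hi
    have hia : i ≠ a := fun h => ha (Or.inl (h ▸ hi))
    have hib : i ≠ b := fun h => hb (h ▸ hi)
    have : p i = g i := by
      simp only [hp, Equiv.trans_apply, Equiv.swap_apply_of_ne_of_ne hia hib]
    rw [this]
    exact (hIu i hi).2
  have hpS : symmDiff (⇑p '' Ω₁) Ω ⊆ Set.range (fun k : Fin n => (k : ℕ)) := by
    have : (p : ℕ → ℕ) ∈ U := hpi hpI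
    have hmem : p ∈ interior {g : Equiv.Perm ℕ |
        symmDiff (⇑g '' Ω₁) Ω ⊆ Set.range (fun k : Fin n => (k : ℕ))} := by
      rw [← hUeq]; exact this
    exact interior_subset
      (s := {g : Equiv.Perm ℕ | symmDiff (⇑g '' Ω₁) Ω ⊆ Set.range (fun k : Fin n => (k : ℕ))}) hmem
  -- g a is in Ω (since g a ∈ g '' Ω₁ and g a ∉ range n)
  have hgaIm : g a ∈ ⇑g '' Ω₁ := ⟨a, haΩ, rfl⟩
  have hgaN : g a ∉ Set.range (fun k : Fin n => (k : ℕ)) := fun h => ha (Or.inr h)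
  have hgaΩ : g a ∈ Ω := by
    by_contra hc
    exact hgaN (hgS (Or.inl ⟨hgaIm, hc⟩))
  -- but g a ∉ p '' Ω₁
  have hgaP : g a ∉ ⇑p '' Ω₁ := by
    rintro ⟨y, hy, hpy⟩
    have : Equiv.swap a b y = a := g.injective hpy
    rcases eq_or_ne y a with rfl | hya
    · rw [Equiv.swap_apply_left] at this
      exact hab this.symm
    · rcases eq_or_ne y b with rfl | hyb
      · exact hbΩ₁ hy
      · rw [Equiv.swap_apply_of_ne_of_ne hya hyb] at this
        exact hya this
  exact hgaN (hpS (Or.inr ⟨hgaΩ, hgaP⟩))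

private lemma isMeagre_S (Ω₁ Ω₂ Ω : Set ℕ) (h1 : Ω₁.Infinite) (h2 : Ω₂.Infinite)
    (hd : Disjoint Ω₁ Ω₂) (n : ℕ) :
    IsMeagre {g : Equiv.Perm ℕ |
      symmDiff (⇑g '' Ω₁) Ω ⊆ Set.range (fun k : Fin n => (k : ℕ))} := by
  set s := {g : Equiv.Perm ℕ |
    symmDiff (⇑g '' Ω₁) Ω ⊆ Set.range (fun k : Fin n => (k : ℕ))}
  have hcl : IsClosed s := isClosed_S Ω₁ Ω n
  have hint : interior s = ∅ := interior_S_empty Ω₁ Ω₂ Ω h1 h2 hd n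
  have : IsOpen sᶜ ∧ Dense sᶜ := isClosed_isNowhereDense_iff_compl.mp
    ⟨hcl, hcl.isNowhereDense_iff.mpr hint⟩
  rw [IsMeagre]
  exact residual_of_dense_open this.1 this.2

/-- If `ω = Ω₁ ∪ Ω₂` is a partition into two infinite sets, then
`H = {g ∈ Sym(ω) : |g[Ω₁] △ Ω_i| < ℵ₀ for some i ∈ {1,2}}` is a meagre subset
of `Sym(ω)` with the Polish topology of pointwise convergence. -/
theorem stmt_5 (Ω₁ Ω₂ : Set ℕ) (h1 : Ω₁.Infinite) (h2 : Ω₂.Infinite)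
    (hu : Ω₁ ∪ Ω₂ = Set.univ) (hd : Disjoint Ω₁ Ω₂) :
    IsMeagre {g : Equiv.Perm ℕ |
      (symmDiff (⇑g '' Ω₁) Ω₁).Finite ∨ (symmDiff (⇑g '' Ω₁) Ω₂).Finite} := by
  have key : {g : Equiv.Perm ℕ |
      (symmDiff (⇑g '' Ω₁) Ω₁).Finite ∨ (symmDiff (⇑g '' Ω₁) Ω₂).Finite} ⊆
      ⋃ n : ℕ,
        ({g : Equiv.Perm ℕ | symmDiff (⇑g '' Ω₁) Ω₁ ⊆ Set.range (fun k : Fin n => (k : ℕ))} ∪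
         {g : Equiv.Perm ℕ | symmDiff (⇑g '' Ω₁) Ω₂ ⊆ Set.range (fun k : Fin n => (k : ℕ))}) := by
    rintro g (hf | hf) <;> [skip; skip] <;>
    · obtain ⟨n, hn⟩ : ∃ n, symmDiff (⇑g '' Ω₁) _ ⊆ Set.range (fun k : Fin n => (k : ℕ)) := by
        obtain ⟨N, hN⟩ := hf.bddAbove
        refine ⟨N + 1, fun x hx => ?_⟩
        have hxN : x ≤ N := hN hx
        exact ⟨⟨x, Nat.lt_succ_of_le hxN⟩, rfl⟩
      exact Set.mem_iUnion.mpr ⟨n, by first | exact Or.inl hn | exact Or.inr hn⟩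
  refine (isMeagre_iUnion fun n => ?_).mono key
  have hA := isMeagre_S Ω₁ Ω₂ Ω₁ h1 h2 hd n
  have hB := isMeagre_S Ω₁ Ω₂ Ω₂ h1 h2 hd n
  rw [IsMeagre, Set.compl_union]
  exact Filter.inter_mem hA hB
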